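/- Let $p \in L^2(\mathbb{T}^d)$ satisfy $\int_{\mathbb{T}^d} p = 1$ and $\|p\|_{L^2} \le \pi_2$ for some $\pi_2 \ge 1$ (where $\mathbb{T}^d$ has total measure 1). Then for every $\hat{u} \in L^2(\mathbb{T}^d)$ with $(\hat{u},p) = 0$ one has $|(\hat{u},1)| \le (1 - \tfrac{1}{2\pi_2^2})\|\hat{u}\|_{L^2}$, and consequently $\|\hat{u} - (\hat{u},1)\|_{L^2} \ge \tfrac{1}{2\pi_2^2}\|\hat{u}\|_{L^2}$. -/

import Mathlib

open MeasureTheory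

noncomputable section

abbrev Torus (d : ℕ) := Fin d → AddCircle (1 : ℝ)
abbrev L2T (d : ℕ) := Lp ℝ 2 (volume : Measure (Torus d))

/-- The constant function `1` as an element of `L²(𝕋^d)`. -/
def oneL2 (d : ℕ) : L2T d := (memLp_const (1 : ℝ)).toLp _

/-- if `p ∈ L²(𝕋^d)` has `∫ p = 1` and `‖p‖ ≤ π₂` with `π₂ ≥ 1`, then for every
`û ⊥ p` one has `|(û, 1)| ≤ (1 - 1/(2π₂²)) ‖û‖` and hence
`‖û - (û,1)·1‖ ≥ (2π₂²)⁻¹ ‖û‖`. -/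
theorem orthogonal_projection_bound (d : ℕ) (π₂ : ℝ) (hπ₂ : 1 ≤ π₂)
    (p : L2T d) (hp_mass : ∫ ξ, (p : Torus d → ℝ) ξ = 1) (hp_norm : ‖p‖ ≤ π₂)
    (u : L2T d) (hu : (inner ℝ u p : ℝ) = 0) :
    |(inner ℝ u (oneL2 d) : ℝ)| ≤ (1 - 1 / (2 * π₂ ^ 2)) * ‖u‖ ∧
    (1 / (2 * π₂ ^ 2)) * ‖u‖ ≤ ‖u - (inner ℝ u (oneL2 d) : ℝ) • oneL2 d‖ := by
  have hvol : (volume : Measure (Torus d)) Set.univ = 1 := by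
    rw [show (volume : Measure (Torus d)) = Measure.pi (fun _ => volume) from rfl]
    rw [Measure.pi_univ]
    simp [AddCircle.measure_univ]
  have hone_ae : (oneL2 d : Torus d → ℝ) =ᵐ[volume] fun _ => (1 : ℝ) :=
    MemLp.coeFn_toLp _
  have hinner_one : ∀ f : L2T d, (inner ℝ f (oneL2 d) : ℝ) = ∫ a, (f : Torus d → ℝ) a := by
    intro f
    rw [L2.inner_def]
    refine integral_congr_ae ?_
    filter_upwards [hone_ae] with a ha
    simp [ha, RCLike.inner_apply]
  have hp1 : (inner ℝ p (oneL2 d) : ℝ) = 1 := by rw [hinner_one]; exact hp_mass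
  have hnorm_one : ‖oneL2 d‖ = 1 := by
    have h2 : (inner ℝ (oneL2 d) (oneL2 d) : ℝ) = ‖oneL2 d‖ ^ 2 := by
      rw [real_inner_self_eq_norm_sq]
    rw [hinner_one] at h2
    have h3 : ∫ a, (oneL2 d : Torus d → ℝ) a = 1 := by
      rw [integral_congr_ae hone_ae]
      simp [Measure.real, hvol]
    nlinarith [norm_nonneg (oneL2 d)]
  set n := ‖p‖ with hn
  have hn1 : 1 ≤ n := by
    have := real_inner_le_norm p (oneL2 d)
    rw [hp1, hnorm_one, mul_one] at this
    exact this
  have hnpos : (0:ℝ) < n := lt_of_lt_of_le one_pos hn1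
  set q : L2T d := oneL2 d - (n ^ 2)⁻¹ • p with hq
  set c : ℝ := (inner ℝ u (oneL2 d) : ℝ) with hc
  have hcq : c = (inner ℝ u q : ℝ) := by
    rw [hq, inner_sub_right, real_inner_smul_right, hu]
    ring
  have hq2 : ‖q‖ ^ 2 = 1 - (n ^ 2)⁻¹ := by
    have hns : ‖(n ^ 2)⁻¹ • p‖ = (n ^ 2)⁻¹ * n := by
      rw [norm_smul, Real.norm_eq_abs, abs_of_pos (by positivity)]
    have hip : (inner ℝ (oneL2 d) ((n ^ 2)⁻¹ • p) : ℝ) = (n ^ 2)⁻¹ := by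
      rw [real_inner_smul_right, real_inner_comm, hp1, mul_one]
    rw [hq, @norm_sub_sq_real, hnorm_one, hip, hns]
    field_simp
    ring
  have hπpos : (0:ℝ) < π₂ := lt_of_lt_of_le one_pos hπ₂
  have hninv : (π₂ ^ 2)⁻¹ ≤ (n ^ 2)⁻¹ := by
    apply inv_anti₀ (by positivity)
    nlinarith
  have hqle : ‖q‖ ≤ 1 - 1 / (2 * π₂ ^ 2) := by
    have key : ‖q‖ ^ 2 ≤ (1 - 1 / (2 * π₂ ^ 2)) ^ 2 := by
      rw [hq2]
      have h4 : (0:ℝ) < π₂ ^ 2 := by positivity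
      have hexp : (1 - 1 / (2 * π₂ ^ 2)) ^ 2 = 1 - (π₂ ^ 2)⁻¹ + (1 / (2 * π₂ ^ 2)) ^ 2 := by
        field_simp
        ring
      rw [hexp]
      have : (0:ℝ) ≤ (1 / (2 * π₂ ^ 2)) ^ 2 := by positivity
      linarith
    have ha : (0:ℝ) ≤ 1 - 1 / (2 * π₂ ^ 2) := by
      have : 1 / (2 * π₂ ^ 2) ≤ 1 / 2 := by
        apply div_le_div_of_nonneg_left (by norm_num) (by norm_num)
        nlinarith
      linarith
    nlinarith [norm_nonneg q]
  have hcb : |c| ≤ (1 - 1 / (2 * π₂ ^ 2)) * ‖u‖ := by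
    calc |c| = |(inner ℝ u q : ℝ)| := by rw [hcq]
      _ ≤ ‖u‖ * ‖q‖ := abs_real_inner_le_norm u q
      _ ≤ ‖u‖ * (1 - 1 / (2 * π₂ ^ 2)) := by
          apply mul_le_mul_of_nonneg_left hqle (norm_nonneg u)
      _ = (1 - 1 / (2 * π₂ ^ 2)) * ‖u‖ := mul_comm _ _
  refine ⟨hcb, ?_⟩
  have htri : ‖u‖ - ‖c • oneL2 d‖ ≤ ‖u - c • oneL2 d‖ := norm_sub_norm_le _ _
  have hcs : ‖c • oneL2 d‖ = |c| := by
    rw [norm_smul, Real.norm_eq_abs, hnorm_one, mul_one]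
  rw [hcs] at htri
  have : (1 / (2 * π₂ ^ 2)) * ‖u‖ ≤ ‖u‖ - |c| := by
    nlinarith
  linarith
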